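/- For every non-ambiguous tree A, the number of non-ambiguous trees isomorphic to A equals e_L(A)·e_R(A), where e_L(A) is the number of bijections f : V_L → {1, …, |V_L|} such that f(u) < f(v) whenever u, v ∈ V_L, u ≠ v and u is an ancestor of v in A, and e_R(A) is defined in the same way with V_R in place of V_L. -/

import Mathlib

/-- A non-ambiguous tree: a finite set of points of `ℕ × ℕ`. -/
def IsNAT (A : Finset (ℕ × ℕ)) : Prop :=
  (0, 0) ∈ A ∧
  (∀ p ∈ A, p ≠ (0, 0) →
    Xor' (∃ q ∈ A, q.1 = p.1 ∧ q.2 < p.2) (∃ r ∈ A, r.2 = p.2 ∧ r.1 < p.1)) ∧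
  (∀ p ∈ A, (∀ x' < p.1, ∃ q ∈ A, q.1 = x') ∧ (∀ y' < p.2, ∃ q ∈ A, q.2 = y'))

/-- The set of left children of a non-ambiguous tree. -/
def VL (A : Finset (ℕ × ℕ)) : Set (ℕ × ℕ) :=
  {p | p ∈ A ∧ p ≠ (0, 0) ∧ ∃ r ∈ A, r.2 = p.2 ∧ r.1 < p.1}

/-- The set of right children of a non-ambiguous tree. -/
def VR (A : Finset (ℕ × ℕ)) : Set (ℕ × ℕ) :=
  {p | p ∈ A ∧ p ≠ (0, 0) ∧ ∃ q ∈ A, q.1 = p.1 ∧ q.2 < p.2}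

/-- `q` is the parent of `p`, with `p` a left child, in the non-ambiguous tree `A`. -/
def LeftParent (A : Finset (ℕ × ℕ)) (p q : ℕ × ℕ) : Prop :=
  p ∈ A ∧ q ∈ A ∧ q.2 = p.2 ∧ q.1 < p.1 ∧
    ∀ r ∈ A, r.2 = p.2 → r.1 < p.1 → r.1 ≤ q.1

/-- `q` is the parent of `p`, with `p` a right child, in the non-ambiguous tree `A`. -/
def RightParent (A : Finset (ℕ × ℕ)) (p q : ℕ × ℕ) : Prop :=
  p ∈ A ∧ q ∈ A ∧ q.1 = p.1 ∧ q.2 < p.2 ∧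
    ∀ r ∈ A, r.1 = p.1 → r.2 < p.2 → r.2 ≤ q.2

/-- `u` is an ancestor of `v` in `A` (reflexive-transitive closure of the
parent-to-child relation). -/
def Ancestor (A : Finset (ℕ × ℕ)) (u v : ℕ × ℕ) : Prop :=
  Relation.ReflTransGen (fun x y => LeftParent A y x ∨ RightParent A y x) u v

/-- Two non-ambiguous trees are isomorphic (have the same underlying binary tree). -/
def NATIso (A A' : Finset (ℕ × ℕ)) : Prop :=
  ∃ f : ℕ × ℕ → ℕ × ℕ, Set.BijOn f (↑A) (↑A') ∧ f (0, 0) = (0, 0) ∧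
    ∀ p ∈ A, ∀ q ∈ A,
      (LeftParent A p q ↔ LeftParent A' (f p) (f q)) ∧
      (RightParent A p q ↔ RightParent A' (f p) (f q))

/-- The number of non-ambiguous trees isomorphic to `A`. -/
noncomputable def NATcount (A : Finset (ℕ × ℕ)) : ℕ :=
  Set.ncard {A' : Finset (ℕ × ℕ) | IsNAT A' ∧ NATIso A A'}

/-- The number of linear extensions of the ancestor poset on the left children of `A`. -/
noncomputable def eL (A : Finset (ℕ × ℕ)) : ℕ :=
  Set.ncard {f : ↥(VL A) → ℕ | Function.Injective f ∧
    Set.range f = Set.Icc 1 (VL A).ncard ∧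
    ∀ u v : ↥(VL A), (u : ℕ × ℕ) ≠ (v : ℕ × ℕ) → Ancestor A u v → f u < f v}

/-- The number of linear extensions of the ancestor poset on the right children of `A`. -/
noncomputable def eR (A : Finset (ℕ × ℕ)) : ℕ :=
  Set.ncard {f : ↥(VR A) → ℕ | Function.Injective f ∧
    Set.range f = Set.Icc 1 (VR A).ncard ∧
    ∀ u v : ↥(VR A), (u : ℕ × ℕ) ≠ (v : ℕ × ℕ) → Ancestor A u v → f u < f v}

section NATBasics

variable {B : Finset (ℕ × ℕ)} {p q u v w : ℕ × ℕ}

lemma LeftParent.fst_pos (h : LeftParent B p q) : 1 ≤ p.1 :=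
  Nat.one_le_iff_ne_zero.2 (by have := h.2.2.2.1; omega)

lemma RightParent.snd_pos (h : RightParent B p q) : 1 ≤ p.2 :=
  Nat.one_le_iff_ne_zero.2 (by have := h.2.2.2.1; omega)

lemma LeftParent.ne_root (h : LeftParent B p q) : p ≠ (0, 0) := by
  have := h.fst_pos; intro hp; rw [hp] at this; simp at this

lemma RightParent.ne_root (h : RightParent B p q) : p ≠ (0, 0) := by
  have := h.snd_pos; intro hp; rw [hp] at this; simp at this

lemma not_left_and_right (hB : IsNAT B) (hl : LeftParent B p q) (hr : RightParent B p u) :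
    False := by
  have hx := hB.2.1 p hl.1 hl.ne_root
  rcases hx with ⟨_, hno⟩ | ⟨_, hno⟩
  · exact hno ⟨q, hl.2.1, hl.2.2.1, hl.2.2.2.1⟩
  · exact hno ⟨u, hr.2.1, hr.2.2.1, hr.2.2.2.1⟩

lemma leftParent_unique (h : LeftParent B p q) (h' : LeftParent B p u) : q = u := by
  have h1 := h.2.2.2.2 u h'.2.1 h'.2.2.1 h'.2.2.2.1
  have h2 := h'.2.2.2.2 q h.2.1 h.2.2.1 h.2.2.2.1
  have := h.2.2.1; have := h'.2.2.1
  exact Prod.ext (by omega) (by omega)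

lemma rightParent_unique (h : RightParent B p q) (h' : RightParent B p u) : q = u := by
  have h1 := h.2.2.2.2 u h'.2.1 h'.2.2.1 h'.2.2.2.1
  have h2 := h'.2.2.2.2 q h.2.1 h.2.2.1 h.2.2.2.1
  have := h.2.2.1; have := h'.2.2.1
  exact Prod.ext (by omega) (by omega)

lemma parent_unique (hB : IsNAT B) (h : LeftParent B p q ∨ RightParent B p q)
    (h' : LeftParent B p u ∨ RightParent B p u) : q = u := by
  rcases h with h | h <;> rcases h' with h' | h'
  · exact leftParent_unique h h'
  · exact absurd (not_left_and_right hB h h') not_false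
  · exact absurd (not_left_and_right hB h' h) not_false
  · exact rightParent_unique h h'

lemma step_le (h : LeftParent B p q ∨ RightParent B p q) :
    q.1 ≤ p.1 ∧ q.2 ≤ p.2 ∧ q.1 + q.2 < p.1 + p.2 := by
  rcases h with h | h
  · have h1 := h.2.2.1; have h2 := h.2.2.2.1; omega
  · have h1 := h.2.2.1; have h2 := h.2.2.2.1; omega

lemma ancestor_le (h : Ancestor B u v) : u.1 ≤ v.1 ∧ u.2 ≤ v.2 := by
  induction h with
  | refl => omega
  | tail _ hstep ih =>
      rcases step_le hstep with ⟨h1, h2, _⟩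
      omega

lemma exists_leftParent (hp : p ∈ B) (h : ∃ r ∈ B, r.2 = p.2 ∧ r.1 < p.1) :
    ∃ q, LeftParent B p q := by
  classical
  obtain ⟨r, hr, hr2, hr1⟩ := h
  have hne : (B.filter (fun r => r.2 = p.2 ∧ r.1 < p.1)).Nonempty :=
    ⟨r, Finset.mem_filter.2 ⟨hr, hr2, hr1⟩⟩
  obtain ⟨q, hq, hqmax⟩ := Finset.exists_max_image _ Prod.fst hne
  rw [Finset.mem_filter] at hq
  refine ⟨q, hp, hq.1, hq.2.1, hq.2.2, fun s hs hs2 hs1 => ?_⟩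
  exact hqmax s (Finset.mem_filter.2 ⟨hs, hs2, hs1⟩)

lemma exists_rightParent (hp : p ∈ B) (h : ∃ q ∈ B, q.1 = p.1 ∧ q.2 < p.2) :
    ∃ q, RightParent B p q := by
  classical
  obtain ⟨r, hr, hr2, hr1⟩ := h
  have hne : (B.filter (fun r => r.1 = p.1 ∧ r.2 < p.2)).Nonempty :=
    ⟨r, Finset.mem_filter.2 ⟨hr, hr2, hr1⟩⟩
  obtain ⟨q, hq, hqmax⟩ := Finset.exists_max_image _ Prod.snd hne
  rw [Finset.mem_filter] at hq
  refine ⟨q, hp, hq.1, hq.2.1, hq.2.2, fun s hs hs2 hs1 => ?_⟩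
  exact hqmax s (Finset.mem_filter.2 ⟨hs, hs2, hs1⟩)

lemma exists_parent (hB : IsNAT B) (hp : p ∈ B) (hne : p ≠ (0, 0)) :
    ∃ q, LeftParent B p q ∨ RightParent B p q := by
  rcases hB.2.1 p hp hne with ⟨h, _⟩ | ⟨h, _⟩
  · obtain ⟨q, hq⟩ := exists_rightParent hp h; exact ⟨q, Or.inr hq⟩
  · obtain ⟨q, hq⟩ := exists_leftParent hp h; exact ⟨q, Or.inl hq⟩

lemma mem_VL_iff (hB : IsNAT B) :
    p ∈ VL B ↔ p ∈ B ∧ 1 ≤ p.1 ∧ ∀ q ∈ B, q.1 = p.1 → p.2 ≤ q.2 := by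
  constructor
  · rintro ⟨hpB, hne, r, hr, hr2, hr1⟩
    refine ⟨hpB, by omega, fun q hq hq1 => ?_⟩
    by_contra hlt
    rcases hB.2.1 p hpB hne with ⟨_, hno⟩ | ⟨_, hno⟩
    · exact hno ⟨r, hr, hr2, hr1⟩
    · exact hno ⟨q, hq, hq1, by omega⟩
  · rintro ⟨hpB, h1, hmin⟩
    have hne : p ≠ (0, 0) := by intro h; rw [h] at h1; simp at h1
    rcases hB.2.1 p hpB hne with ⟨⟨q, hq, hq1, hq2⟩, _⟩ | ⟨h, _⟩
    · exact absurd (hmin q hq hq1) (by omega)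
    · exact ⟨hpB, hne, h⟩

lemma mem_VR_iff (hB : IsNAT B) :
    p ∈ VR B ↔ p ∈ B ∧ 1 ≤ p.2 ∧ ∀ q ∈ B, q.2 = p.2 → p.1 ≤ q.1 := by
  constructor
  · rintro ⟨hpB, hne, r, hr, hr2, hr1⟩
    refine ⟨hpB, by omega, fun q hq hq1 => ?_⟩
    by_contra hlt
    rcases hB.2.1 p hpB hne with ⟨_, hno⟩ | ⟨_, hno⟩
    · exact hno ⟨q, hq, hq1, by omega⟩
    · exact hno ⟨r, hr, hr2, hr1⟩
  · rintro ⟨hpB, h1, hmin⟩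
    have hne : p ≠ (0, 0) := by intro h; rw [h] at h1; simp at h1
    rcases hB.2.1 p hpB hne with ⟨h, _⟩ | ⟨⟨q, hq, hq1, hq2⟩, _⟩
    · exact ⟨hpB, hne, h⟩
    · exact absurd (hmin q hq hq1) (by omega)

lemma VL_fst_injOn (hB : IsNAT B) (hu : u ∈ VL B) (hv : v ∈ VL B) (h : u.1 = v.1) :
    u = v := by
  rw [mem_VL_iff hB] at hu hv
  have h1 := hu.2.2 v hv.1 h.symm
  have h2 := hv.2.2 u hu.1 h
  exact Prod.ext h (by omega)

lemma VR_snd_injOn (hB : IsNAT B) (hu : u ∈ VR B) (hv : v ∈ VR B) (h : u.2 = v.2) :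
    u = v := by
  rw [mem_VR_iff hB] at hu hv
  have h1 := hu.2.2 v hv.1 h.symm
  have h2 := hv.2.2 u hu.1 h
  exact Prod.ext (by omega) h

lemma VL_fst_pos (hu : u ∈ VL B) : 1 ≤ u.1 := by
  obtain ⟨_, _, r, _, _, h⟩ := hu; omega

lemma VR_snd_pos (hu : u ∈ VR B) : 1 ≤ u.2 := by
  obtain ⟨_, _, r, _, _, h⟩ := hu; omega

end NATBasics
section NATChains

variable {B : Finset (ℕ × ℕ)} {p q u v w : ℕ × ℕ}

lemma rstep_ancestor (h : LeftParent B v u ∨ RightParent B v u) : Ancestor B u v :=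
  Relation.ReflTransGen.single h

/-- every point has a right-parent chain down to the minimum of its column -/
lemma exists_colMin_chain (hB : IsNAT B) (hp : p ∈ B) :
    ∃ u ∈ B, u.1 = p.1 ∧ (∀ q ∈ B, q.1 = p.1 → u.2 ≤ q.2) ∧
      Relation.ReflTransGen (fun x y => RightParent B y x) u p := by
  have H : ∀ n p, p ∈ B → p.2 = n → ∃ u ∈ B, u.1 = p.1 ∧ (∀ q ∈ B, q.1 = p.1 → u.2 ≤ q.2) ∧
      Relation.ReflTransGen (fun x y => RightParent B y x) u p := by
    intro n
    induction n using Nat.strong_induction_on with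
    | _ n ih =>
    intro p hp hn
    subst hn
    by_cases hex : ∃ q ∈ B, q.1 = p.1 ∧ q.2 < p.2
    · obtain ⟨q, hq⟩ := exists_rightParent hp hex
      obtain ⟨u, huB, hu1, humin, huch⟩ := ih q.2 hq.2.2.2.1 q hq.2.1 rfl
      rw [hq.2.2.1] at hu1 humin
      exact ⟨u, huB, hu1, humin, huch.tail hq⟩
    · push_neg at hex
      refine ⟨p, hp, rfl, fun q hq hq1 => ?_, Relation.ReflTransGen.refl⟩
      by_contra h
      exact absurd (hex q hq hq1) (by omega)
  exact H p.2 p hp rfl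

lemma exists_rowMin_chain (hB : IsNAT B) (hp : p ∈ B) :
    ∃ u ∈ B, u.2 = p.2 ∧ (∀ q ∈ B, q.2 = p.2 → u.1 ≤ q.1) ∧
      Relation.ReflTransGen (fun x y => LeftParent B y x) u p := by
  have H : ∀ n p, p ∈ B → p.1 = n → ∃ u ∈ B, u.2 = p.2 ∧ (∀ q ∈ B, q.2 = p.2 → u.1 ≤ q.1) ∧
      Relation.ReflTransGen (fun x y => LeftParent B y x) u p := by
    intro n
    induction n using Nat.strong_induction_on with
    | _ n ih =>
    intro p hp hn
    subst hn
    by_cases hex : ∃ q ∈ B, q.2 = p.2 ∧ q.1 < p.1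
    · obtain ⟨q, hq⟩ := exists_leftParent hp hex
      obtain ⟨u, huB, hu1, humin, huch⟩ := ih q.1 hq.2.2.2.1 q hq.2.1 rfl
      rw [hq.2.2.1] at hu1 humin
      exact ⟨u, huB, hu1, humin, huch.tail hq⟩
    · push_neg at hex
      refine ⟨p, hp, rfl, fun q hq hq1 => ?_, Relation.ReflTransGen.refl⟩
      by_contra h
      exact absurd (hex q hq hq1) (by omega)
  exact H p.1 p hp rfl

lemma colMin_eq_root (hB : IsNAT B) (huB : u ∈ B) (hu1 : u.1 = 0)
    (hmin : ∀ q ∈ B, q.1 = 0 → u.2 ≤ q.2) : u = (0, 0) := by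
  have := hmin (0, 0) hB.1 rfl
  exact Prod.ext hu1 (by simpa using this)

lemma rowMin_eq_root (hB : IsNAT B) (huB : u ∈ B) (hu2 : u.2 = 0)
    (hmin : ∀ q ∈ B, q.2 = 0 → u.1 ≤ q.1) : u = (0, 0) := by
  have := hmin (0, 0) hB.1 rfl
  exact Prod.ext (by simpa using this) hu2

lemma colMin_mem_VL (hB : IsNAT B) (huB : u ∈ B) (hu1 : 1 ≤ u.1)
    (hmin : ∀ q ∈ B, q.1 = u.1 → u.2 ≤ q.2) : u ∈ VL B :=
  (mem_VL_iff hB).2 ⟨huB, hu1, hmin⟩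

lemma rowMin_mem_VR (hB : IsNAT B) (huB : u ∈ B) (hu2 : 1 ≤ u.2)
    (hmin : ∀ q ∈ B, q.2 = u.2 → u.1 ≤ q.1) : u ∈ VR B :=
  (mem_VR_iff hB).2 ⟨huB, hu2, hmin⟩

/-- within a row, a point further right is a descendant -/
lemma row_ancestor (hB : IsNAT B) (hp : p ∈ B) (hq : q ∈ B) (hrow : p.2 = q.2)
    (hlt : p.1 < q.1) : Ancestor B p q := by
  have H : ∀ n q, q ∈ B → p.2 = q.2 → p.1 < q.1 → q.1 = n → Ancestor B p q := by
    intro n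
    induction n using Nat.strong_induction_on with
    | _ n ih =>
    intro q hq hrow hlt hn
    subst hn
    obtain ⟨q₀, hq₀⟩ := exists_leftParent hq ⟨p, hp, hrow, hlt⟩
    have hple : p.1 ≤ q₀.1 := hq₀.2.2.2.2 p hp hrow hlt
    rcases eq_or_lt_of_le hple with heq | hlt'
    · have : p = q₀ := Prod.ext heq (by rw [hrow, ← hq₀.2.2.1])
      rw [this]
      exact rstep_ancestor (Or.inl hq₀)
    · have hrow' : p.2 = q₀.2 := by rw [hrow, hq₀.2.2.1]
      exact (ih q₀.1 hq₀.2.2.2.1 q₀ hq₀.2.1 hrow' hlt' rfl).tail (Or.inl hq₀)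
  exact H q.1 q hq hrow hlt rfl

lemma col_ancestor (hB : IsNAT B) (hp : p ∈ B) (hq : q ∈ B) (hcol : p.1 = q.1)
    (hlt : p.2 < q.2) : Ancestor B p q := by
  have H : ∀ n q, q ∈ B → p.1 = q.1 → p.2 < q.2 → q.2 = n → Ancestor B p q := by
    intro n
    induction n using Nat.strong_induction_on with
    | _ n ih =>
    intro q hq hcol hlt hn
    subst hn
    obtain ⟨q₀, hq₀⟩ := exists_rightParent hq ⟨p, hp, hcol, hlt⟩
    have hple : p.2 ≤ q₀.2 := hq₀.2.2.2.2 p hp hcol hlt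
    rcases eq_or_lt_of_le hple with heq | hlt'
    · have : p = q₀ := Prod.ext (by rw [hcol, ← hq₀.2.2.1]) heq
      rw [this]
      exact rstep_ancestor (Or.inr hq₀)
    · have hcol' : p.1 = q₀.1 := by rw [hcol, hq₀.2.2.1]
      exact (ih q₀.2 hq₀.2.2.2.1 q₀ hq₀.2.1 hcol' hlt' rfl).tail (Or.inr hq₀)
  exact H q.2 q hq hcol hlt rfl

/-- ancestors of a common point are comparable -/
lemma ancestor_comparable (hB : IsNAT B) (hu : Ancestor B u w) (hv : Ancestor B v w) :
    Ancestor B u v ∨ Ancestor B v u := by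
  have H : ∀ n w, Ancestor B u w → Ancestor B v w → w.1 + w.2 = n →
      Ancestor B u v ∨ Ancestor B v u := by
    intro n
    induction n using Nat.strong_induction_on with
    | _ n ih =>
    intro w hu hv hn
    subst hn
    rcases hu.cases_tail with rfl | ⟨c, hc, hcw⟩
    · exact Or.inr hv
    rcases hv.cases_tail with rfl | ⟨d, hd, hdw⟩
    · exact Or.inl hu
    have hcd : c = d := parent_unique hB hcw hdw
    subst hcd
    exact ih (c.1 + c.2) (step_le hcw).2.2 c hc hd rfl
  exact H (w.1 + w.2) w hu hv rfl

lemma VL_ancestor_fst_lt (hB : IsNAT B) (hu : u ∈ VL B) (hv : v ∈ VL B)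
    (hne : u ≠ v) (h : Ancestor B u v) : u.1 < v.1 := by
  have hle := (ancestor_le h).1
  rcases eq_or_lt_of_le hle with heq | hlt
  · exact absurd (VL_fst_injOn hB hu hv heq) hne
  · exact hlt

lemma VR_ancestor_snd_lt (hB : IsNAT B) (hu : u ∈ VR B) (hv : v ∈ VR B)
    (hne : u ≠ v) (h : Ancestor B u v) : u.2 < v.2 := by
  have hle := (ancestor_le h).2
  rcases eq_or_lt_of_le hle with heq | hlt
  · exact absurd (VR_snd_injOn hB hu hv heq) hne
  · exact hlt

/-- a node has at most one left child -/
lemma leftChild_unique (h : LeftParent B p q) (h' : LeftParent B u q) : p = u := by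
  rcases lt_trichotomy p.1 u.1 with hlt | heq | hlt
  · have := h'.2.2.2.2 p h.1 (by rw [← h.2.2.1, h'.2.2.1]) hlt
    have := h.2.2.2.1; omega
  · exact Prod.ext heq (by rw [← h.2.2.1, ← h'.2.2.1])
  · have := h.2.2.2.2 u h'.1 (by rw [← h'.2.2.1, h.2.2.1]) hlt
    have := h'.2.2.2.1; omega

lemma rightChild_unique (h : RightParent B p q) (h' : RightParent B u q) : p = u := by
  rcases lt_trichotomy p.2 u.2 with hlt | heq | hlt
  · have := h'.2.2.2.2 p h.1 (by rw [← h.2.2.1, h'.2.2.1]) hlt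
    have := h.2.2.2.1; omega
  · exact Prod.ext (by rw [← h.2.2.1, ← h'.2.2.1]) heq
  · have := h.2.2.2.2 u h'.1 (by rw [← h'.2.2.1, h.2.2.1]) hlt
    have := h'.2.2.2.1; omega

end NATChains
section NATCols

variable {B : Finset (ℕ × ℕ)} {p q u v : ℕ × ℕ}

lemma downward_closed_eq_range {s : Finset ℕ} (h : ∀ x ∈ s, ∀ y < x, y ∈ s) :
    s = Finset.range s.card := by
  have hsub : Finset.range s.card ⊆ s := by
    intro k hk
    rw [Finset.mem_range] at hk
    by_contra hks
    have hlt : s ⊆ Finset.range k := by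
      intro x hx
      rw [Finset.mem_range]
      rcases lt_trichotomy x k with h' | rfl | h'
      · exact h'
      · exact absurd hx hks
      · exact absurd (h x hx k h') hks
    have := Finset.card_le_card hlt
    rw [Finset.card_range] at this
    omega
  exact ((Finset.eq_of_subset_of_card_le hsub (by rw [Finset.card_range])).symm)

lemma cols_image_eq (hB : IsNAT B) :
    B.image Prod.fst = Finset.range (B.image Prod.fst).card := by
  apply downward_closed_eq_range
  intro x hx y hy
  rw [Finset.mem_image] at hx ⊢
  obtain ⟨p, hp, rfl⟩ := hx
  obtain ⟨q, hq, hq1⟩ := (hB.2.2 p hp).1 y hy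
  exact ⟨q, hq, hq1⟩

lemma rows_image_eq (hB : IsNAT B) :
    B.image Prod.snd = Finset.range (B.image Prod.snd).card := by
  apply downward_closed_eq_range
  intro x hx y hy
  rw [Finset.mem_image] at hx ⊢
  obtain ⟨p, hp, rfl⟩ := hx
  obtain ⟨q, hq, hq1⟩ := (hB.2.2 p hp).2 y hy
  exact ⟨q, hq, hq1⟩

lemma VL_fst_image_cols (hB : IsNAT B) :
    Prod.fst '' (VL B) = ↑(B.image Prod.fst) \ {0} := by
  ext x
  constructor
  · rintro ⟨u, hu, rfl⟩
    refine ⟨Finset.mem_coe.2 (Finset.mem_image.2 ⟨u, hu.1, rfl⟩), ?_⟩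
    have := VL_fst_pos hu
    simp; omega
  · rintro ⟨hx, hx0⟩
    rw [Finset.mem_coe, Finset.mem_image] at hx
    obtain ⟨p, hp, rfl⟩ := hx
    obtain ⟨u, huB, hu1, humin, -⟩ := exists_colMin_chain hB hp
    have hpos : 1 ≤ u.1 := by
      simp only [Set.mem_singleton_iff] at hx0
      omega
    refine ⟨u, colMin_mem_VL hB huB hpos ?_, hu1⟩
    intro q hq hq1
    exact humin q hq (by omega)

lemma VR_snd_image_rows (hB : IsNAT B) :
    Prod.snd '' (VR B) = ↑(B.image Prod.snd) \ {0} := by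
  ext x
  constructor
  · rintro ⟨u, hu, rfl⟩
    refine ⟨Finset.mem_coe.2 (Finset.mem_image.2 ⟨u, hu.1, rfl⟩), ?_⟩
    have := VR_snd_pos hu
    simp; omega
  · rintro ⟨hx, hx0⟩
    rw [Finset.mem_coe, Finset.mem_image] at hx
    obtain ⟨p, hp, rfl⟩ := hx
    obtain ⟨u, huB, hu1, humin, -⟩ := exists_rowMin_chain hB hp
    have hpos : 1 ≤ u.2 := by
      simp only [Set.mem_singleton_iff] at hx0
      omega
    refine ⟨u, rowMin_mem_VR hB huB hpos ?_, hu1⟩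
    intro q hq hq1
    exact humin q hq (by omega)

lemma VL_fst_image (hB : IsNAT B) :
    Prod.fst '' (VL B) = Set.Icc 1 ((VL B).ncard) := by
  have h0 : (0 : ℕ) ∈ B.image Prod.fst := Finset.mem_image.2 ⟨(0,0), hB.1, rfl⟩
  have hcpos : 1 ≤ (B.image Prod.fst).card := Finset.card_pos.2 ⟨0, h0⟩
  have himg := VL_fst_image_cols hB
  have hncard : (VL B).ncard = (B.image Prod.fst).card - 1 := by
    have hinj : Set.InjOn Prod.fst (VL B) := fun a ha b hb hab => VL_fst_injOn hB ha hb hab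
    rw [← Set.ncard_image_of_injOn hinj, himg, ← Finset.coe_erase,
      Set.ncard_coe_finset, Finset.card_erase_of_mem h0]
  rw [himg, hncard, cols_image_eq hB]
  ext x
  simp only [Finset.coe_range, Finset.card_range, Set.mem_diff, Set.mem_Iio, Set.mem_singleton_iff, Set.mem_Icc]
  omega

lemma VR_snd_image (hB : IsNAT B) :
    Prod.snd '' (VR B) = Set.Icc 1 ((VR B).ncard) := by
  have h0 : (0 : ℕ) ∈ B.image Prod.snd := Finset.mem_image.2 ⟨(0,0), hB.1, rfl⟩
  have hcpos : 1 ≤ (B.image Prod.snd).card := Finset.card_pos.2 ⟨0, h0⟩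
  have himg := VR_snd_image_rows hB
  have hncard : (VR B).ncard = (B.image Prod.snd).card - 1 := by
    have hinj : Set.InjOn Prod.snd (VR B) := fun a ha b hb hab => VR_snd_injOn hB ha hb hab
    rw [← Set.ncard_image_of_injOn hinj, himg, ← Finset.coe_erase,
      Set.ncard_coe_finset, Finset.card_erase_of_mem h0]
  rw [himg, hncard, rows_image_eq hB]
  ext x
  simp only [Finset.coe_range, Finset.card_range, Set.mem_diff, Set.mem_Iio, Set.mem_singleton_iff, Set.mem_Icc]
  omega

/-- the unique element of `VL B` in each nonzero column -/
lemma exists_VL_in_col (hB : IsNAT B) (hp : p ∈ B) (hpos : 1 ≤ p.1) :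
    ∃ u ∈ VL B, u.1 = p.1 ∧ Ancestor B u p := by
  obtain ⟨u, huB, hu1, humin, huch⟩ := exists_colMin_chain hB hp
  refine ⟨u, colMin_mem_VL hB huB (by omega) (fun q hq hq1 => humin q hq (by omega)), hu1,
    Relation.ReflTransGen.mono (fun x y h => Or.inr h) _ _ huch⟩

lemma exists_VR_in_row (hB : IsNAT B) (hp : p ∈ B) (hpos : 1 ≤ p.2) :
    ∃ u ∈ VR B, u.2 = p.2 ∧ Ancestor B u p := by
  obtain ⟨u, huB, hu1, humin, huch⟩ := exists_rowMin_chain hB hp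
  refine ⟨u, rowMin_mem_VR hB huB (by omega) (fun q hq hq1 => humin q hq (by omega)), hu1,
    Relation.ReflTransGen.mono (fun x y h => Or.inl h) _ _ huch⟩

end NATCols
section NATIsoLemmas

variable {A A' : Finset (ℕ × ℕ)} {f g : ℕ × ℕ → ℕ × ℕ} {p q u v : ℕ × ℕ}

lemma VL_of_leftParent (h : LeftParent A p q) : p ∈ VL A :=
  ⟨h.1, h.ne_root, q, h.2.1, h.2.2.1, h.2.2.2.1⟩

lemma VR_of_rightParent (h : RightParent A p q) : p ∈ VR A :=
  ⟨h.1, h.ne_root, q, h.2.1, h.2.2.1, h.2.2.2.1⟩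

/-- an isomorphism maps left children onto left children -/
lemma iso_VL_bijOn (hbij : Set.BijOn f ↑A ↑A')
    (hpar : ∀ p ∈ A, ∀ q ∈ A, (LeftParent A p q ↔ LeftParent A' (f p) (f q)) ∧
      (RightParent A p q ↔ RightParent A' (f p) (f q))) :
    Set.BijOn f (VL A) (VL A') := by
  refine ⟨?_, hbij.injOn.mono (fun x hx => hx.1), ?_⟩
  · rintro x hx
    obtain ⟨qx, hqx⟩ := exists_leftParent hx.1 hx.2.2
    exact VL_of_leftParent ((hpar x hx.1 qx hqx.2.1).1.mp hqx)
  · rintro y hy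
    obtain ⟨x, hx, rfl⟩ := hbij.surjOn hy.1
    obtain ⟨qy, hqy⟩ := exists_leftParent hy.1 hy.2.2
    obtain ⟨qx, hqx, rfl⟩ := hbij.surjOn hqy.2.1
    exact ⟨x, VL_of_leftParent ((hpar x hx qx hqx).1.mpr hqy), rfl⟩

lemma iso_VR_bijOn (hbij : Set.BijOn f ↑A ↑A')
    (hpar : ∀ p ∈ A, ∀ q ∈ A, (LeftParent A p q ↔ LeftParent A' (f p) (f q)) ∧
      (RightParent A p q ↔ RightParent A' (f p) (f q))) :
    Set.BijOn f (VR A) (VR A') := by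
  refine ⟨?_, hbij.injOn.mono (fun x hx => hx.1), ?_⟩
  · rintro x hx
    obtain ⟨qx, hqx⟩ := exists_rightParent hx.1 hx.2.2
    exact VR_of_rightParent ((hpar x hx.1 qx hqx.2.1).2.mp hqx)
  · rintro y hy
    obtain ⟨x, hx, rfl⟩ := hbij.surjOn hy.1
    obtain ⟨qy, hqy⟩ := exists_rightParent hy.1 hy.2.2
    obtain ⟨qx, hqx, rfl⟩ := hbij.surjOn hqy.2.1
    exact ⟨x, VR_of_rightParent ((hpar x hx qx hqx).2.mpr hqy), rfl⟩

lemma iso_ancestor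
    (hpar : ∀ p ∈ A, ∀ q ∈ A, (LeftParent A p q ↔ LeftParent A' (f p) (f q)) ∧
      (RightParent A p q ↔ RightParent A' (f p) (f q)))
    (h : Ancestor A u v) : Ancestor A' (f u) (f v) := by
  induction h with
  | refl => exact Relation.ReflTransGen.refl
  | tail hab hstep ih =>
      rename_i b c
      refine ih.tail ?_
      rcases hstep with hs | hs
      · exact Or.inl ((hpar c hs.1 b hs.2.1).1.mp hs)
      · exact Or.inr ((hpar c hs.1 b hs.2.1).2.mp hs)

/-- the isomorphism between two non-ambiguous trees is unique on the tree -/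
lemma iso_eqOn (hA : IsNAT A)
    (hroot : f (0, 0) = (0, 0))
    (hpar : ∀ p ∈ A, ∀ q ∈ A, (LeftParent A p q ↔ LeftParent A' (f p) (f q)) ∧
      (RightParent A p q ↔ RightParent A' (f p) (f q)))
    (hroot' : g (0, 0) = (0, 0))
    (hpar' : ∀ p ∈ A, ∀ q ∈ A, (LeftParent A p q ↔ LeftParent A' (g p) (g q)) ∧
      (RightParent A p q ↔ RightParent A' (g p) (g q)))
    (hp : p ∈ A) : f p = g p := by
  have H : ∀ n p, p ∈ A → p.1 + p.2 = n → f p = g p := by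
    intro n
    induction n using Nat.strong_induction_on with
    | _ n ih =>
    intro p hp hn
    subst hn
    by_cases hr : p = (0, 0)
    · rw [hr, hroot, hroot']
    obtain ⟨q, hq⟩ := exists_parent hA hp hr
    have hqA : q ∈ A := by rcases hq with h | h <;> exact h.2.1
    have hfg : f q = g q := ih (q.1 + q.2) (step_le hq).2.2 q hqA rfl
    rcases hq with h | h
    · have h1 := (hpar p hp q hqA).1.mp h
      have h2 := (hpar' p hp q hqA).1.mp h
      rw [hfg] at h1
      exact leftChild_unique h1 h2
    · have h1 := (hpar p hp q hqA).2.mp h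
      have h2 := (hpar' p hp q hqA).2.mp h
      rw [hfg] at h1
      exact rightChild_unique h1 h2
  exact H (p.1 + p.2) p hp rfl

/-- the first coordinate of `f p` is that of `f` at the column minimum -/
lemma iso_fst_colMin (hA : IsNAT A)
    (hpar : ∀ p ∈ A, ∀ q ∈ A, (LeftParent A p q ↔ LeftParent A' (f p) (f q)) ∧
      (RightParent A p q ↔ RightParent A' (f p) (f q)))
    (hp : p ∈ A) :
    ∃ u ∈ A, u.1 = p.1 ∧ (∀ q ∈ A, q.1 = p.1 → u.2 ≤ q.2) ∧ (f u).1 = (f p).1 := by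
  obtain ⟨u, huB, hu1, humin, huch⟩ := exists_colMin_chain hA hp
  refine ⟨u, huB, hu1, humin, ?_⟩
  clear hu1 humin
  induction huch with
  | refl => rfl
  | tail hab hstep ih =>
      rename_i b c
      have := (hpar c hstep.1 b hstep.2.1).2.mp hstep
      rw [ih hstep.2.1, this.2.2.1]

lemma iso_snd_rowMin (hA : IsNAT A)
    (hpar : ∀ p ∈ A, ∀ q ∈ A, (LeftParent A p q ↔ LeftParent A' (f p) (f q)) ∧
      (RightParent A p q ↔ RightParent A' (f p) (f q)))
    (hp : p ∈ A) :
    ∃ u ∈ A, u.2 = p.2 ∧ (∀ q ∈ A, q.2 = p.2 → u.1 ≤ q.1) ∧ (f u).2 = (f p).2 := by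
  obtain ⟨u, huB, hu1, humin, huch⟩ := exists_rowMin_chain hA hp
  refine ⟨u, huB, hu1, humin, ?_⟩
  clear hu1 humin
  induction huch with
  | refl => rfl
  | tail hab hstep ih =>
      rename_i b c
      have := (hpar c hstep.1 b hstep.2.1).1.mp hstep
      rw [ih hstep.2.1, this.2.2.1]

end NATIsoLemmas
section Construct

open Classical in
noncomputable def Fx (A : Finset (ℕ × ℕ)) (ℓ : ↥(VL A) → ℕ) (x : ℕ) : ℕ :=
  if h : ∃ u : ↥(VL A), (u : ℕ × ℕ).1 = x then ℓ h.choose else 0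

open Classical in
noncomputable def Fy (A : Finset (ℕ × ℕ)) (r : ↥(VR A) → ℕ) (y : ℕ) : ℕ :=
  if h : ∃ u : ↥(VR A), (u : ℕ × ℕ).2 = y then r h.choose else 0

noncomputable def Fmap (A : Finset (ℕ × ℕ)) (ℓ : ↥(VL A) → ℕ) (r : ↥(VR A) → ℕ)
    (p : ℕ × ℕ) : ℕ × ℕ :=
  (Fx A ℓ p.1, Fy A r p.2)

variable {A : Finset (ℕ × ℕ)} {ℓ : ↥(VL A) → ℕ} {r : ↥(VR A) → ℕ} {p q u v : ℕ × ℕ}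

lemma Fx_eq (hA : IsNAT A) (hu : u ∈ VL A) : Fx A ℓ u.1 = ℓ ⟨u, hu⟩ := by
  have h : ∃ u' : ↥(VL A), (u' : ℕ × ℕ).1 = u.1 := ⟨⟨u, hu⟩, rfl⟩
  rw [Fx, dif_pos h]
  congr 1
  exact Subtype.ext (VL_fst_injOn hA h.choose.property hu h.choose_spec)

lemma Fy_eq (hA : IsNAT A) (hu : u ∈ VR A) : Fy A r u.2 = r ⟨u, hu⟩ := by
  have h : ∃ u' : ↥(VR A), (u' : ℕ × ℕ).2 = u.2 := ⟨⟨u, hu⟩, rfl⟩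
  rw [Fy, dif_pos h]
  congr 1
  exact Subtype.ext (VR_snd_injOn hA h.choose.property hu h.choose_spec)

lemma Fx_zero : Fx A ℓ 0 = 0 := by
  rw [Fx, dif_neg]
  rintro ⟨u, hu⟩
  have := VL_fst_pos u.property
  omega

lemma Fy_zero : Fy A r 0 = 0 := by
  rw [Fy, dif_neg]
  rintro ⟨u, hu⟩
  have := VR_snd_pos u.property
  omega

lemma Fmap_root : Fmap A ℓ r (0, 0) = (0, 0) := by
  rw [Fmap]
  simp [Fx_zero, Fy_zero]

lemma Fx_pos (hA : IsNAT A) (hℓr : Set.range ℓ = Set.Icc 1 (VL A).ncard)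
    (hp : p ∈ A) (h1 : 1 ≤ p.1) : 1 ≤ Fx A ℓ p.1 ∧ Fx A ℓ p.1 ≤ (VL A).ncard := by
  obtain ⟨u, hu, hu1, -⟩ := exists_VL_in_col hA hp h1
  rw [← hu1, Fx_eq hA hu]
  have : ℓ ⟨u, hu⟩ ∈ Set.range ℓ := ⟨_, rfl⟩
  rw [hℓr] at this
  exact this

lemma Fy_pos (hA : IsNAT A) (hrr : Set.range r = Set.Icc 1 (VR A).ncard)
    (hp : p ∈ A) (h1 : 1 ≤ p.2) : 1 ≤ Fy A r p.2 ∧ Fy A r p.2 ≤ (VR A).ncard := by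
  obtain ⟨u, hu, hu1, -⟩ := exists_VR_in_row hA hp h1
  rw [← hu1, Fy_eq hA hu]
  have : r ⟨u, hu⟩ ∈ Set.range r := ⟨_, rfl⟩
  rw [hrr] at this
  exact this

lemma Fx_inj (hA : IsNAT A) (hℓi : Function.Injective ℓ)
    (hℓr : Set.range ℓ = Set.Icc 1 (VL A).ncard)
    (hp : p ∈ A) (hq : q ∈ A) (h : Fx A ℓ p.1 = Fx A ℓ q.1) : p.1 = q.1 := by
  by_cases h0p : p.1 = 0 <;> by_cases h0q : q.1 = 0
  · omega
  · rw [h0p, Fx_zero] at h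
    have := (Fx_pos hA hℓr hq (by omega)).1
    omega
  · rw [h0q, Fx_zero] at h
    have := (Fx_pos hA hℓr hp (by omega)).1
    omega
  · obtain ⟨up, hup, hup1, -⟩ := exists_VL_in_col hA hp (by omega)
    obtain ⟨uq, huq, huq1, -⟩ := exists_VL_in_col hA hq (by omega)
    rw [← hup1, ← huq1, Fx_eq hA hup, Fx_eq hA huq] at h
    have h2 : up = uq := congrArg Subtype.val (hℓi h)
    rw [← hup1, ← huq1, h2]

lemma Fy_inj (hA : IsNAT A) (hri : Function.Injective r)
    (hrr : Set.range r = Set.Icc 1 (VR A).ncard)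
    (hp : p ∈ A) (hq : q ∈ A) (h : Fy A r p.2 = Fy A r q.2) : p.2 = q.2 := by
  by_cases h0p : p.2 = 0 <;> by_cases h0q : q.2 = 0
  · omega
  · rw [h0p, Fy_zero] at h
    have := (Fy_pos hA hrr hq (by omega)).1
    omega
  · rw [h0q, Fy_zero] at h
    have := (Fy_pos hA hrr hp (by omega)).1
    omega
  · obtain ⟨up, hup, hup1, -⟩ := exists_VR_in_row hA hp (by omega)
    obtain ⟨uq, huq, huq1, -⟩ := exists_VR_in_row hA hq (by omega)
    rw [← hup1, ← huq1, Fy_eq hA hup, Fy_eq hA huq] at h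
    have h2 : up = uq := congrArg Subtype.val (hri h)
    rw [← hup1, ← huq1, h2]

lemma Fx_lt (hA : IsNAT A)
    (hℓr : Set.range ℓ = Set.Icc 1 (VL A).ncard)
    (hℓm : ∀ u v : ↥(VL A), (u : ℕ × ℕ) ≠ (v : ℕ × ℕ) → Ancestor A u v → ℓ u < ℓ v)
    (hp : p ∈ A) (hq : q ∈ A) (hrow : p.2 = q.2) (hlt : p.1 < q.1) :
    Fx A ℓ p.1 < Fx A ℓ q.1 := by
  obtain ⟨uq, huq, huq1, huqanc⟩ := exists_VL_in_col hA hq (by omega)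
  have hfq : Fx A ℓ q.1 = ℓ ⟨uq, huq⟩ := by rw [← huq1, Fx_eq hA huq]
  by_cases h0 : p.1 = 0
  · rw [h0, Fx_zero, hfq]
    have : ℓ ⟨uq, huq⟩ ∈ Set.range ℓ := ⟨_, rfl⟩
    rw [hℓr, Set.mem_Icc] at this
    omega
  · obtain ⟨up, hup, hup1, hupanc⟩ := exists_VL_in_col hA hp (by omega)
    have hfp : Fx A ℓ p.1 = ℓ ⟨up, hup⟩ := by rw [← hup1, Fx_eq hA hup]
    have hpq : Ancestor A p q := row_ancestor hA hp hq hrow hlt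
    have h1 : Ancestor A up q := hupanc.trans hpq
    have hne : up ≠ uq := by intro h; rw [h] at hup1; omega
    rcases ancestor_comparable hA h1 huqanc with h | h
    · rw [hfp, hfq]
      exact hℓm ⟨up, hup⟩ ⟨uq, huq⟩ hne h
    · have := (ancestor_le h).1
      omega

lemma Fy_lt (hA : IsNAT A)
    (hrr : Set.range r = Set.Icc 1 (VR A).ncard)
    (hrm : ∀ u v : ↥(VR A), (u : ℕ × ℕ) ≠ (v : ℕ × ℕ) → Ancestor A u v → r u < r v)
    (hp : p ∈ A) (hq : q ∈ A) (hcol : p.1 = q.1) (hlt : p.2 < q.2) :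
    Fy A r p.2 < Fy A r q.2 := by
  obtain ⟨uq, huq, huq1, huqanc⟩ := exists_VR_in_row hA hq (by omega)
  have hfq : Fy A r q.2 = r ⟨uq, huq⟩ := by rw [← huq1, Fy_eq hA huq]
  by_cases h0 : p.2 = 0
  · rw [h0, Fy_zero, hfq]
    have : r ⟨uq, huq⟩ ∈ Set.range r := ⟨_, rfl⟩
    rw [hrr, Set.mem_Icc] at this
    omega
  · obtain ⟨up, hup, hup1, hupanc⟩ := exists_VR_in_row hA hp (by omega)
    have hfp : Fy A r p.2 = r ⟨up, hup⟩ := by rw [← hup1, Fy_eq hA hup]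
    have hpq : Ancestor A p q := col_ancestor hA hp hq hcol hlt
    have h1 : Ancestor A up q := hupanc.trans hpq
    have hne : up ≠ uq := by intro h; rw [h] at hup1; omega
    rcases ancestor_comparable hA h1 huqanc with h | h
    · rw [hfp, hfq]
      exact hrm ⟨up, hup⟩ ⟨uq, huq⟩ hne h
    · have := (ancestor_le h).2
      omega

lemma Fx_lt_iff (hA : IsNAT A)
    (hℓr : Set.range ℓ = Set.Icc 1 (VL A).ncard)
    (hℓm : ∀ u v : ↥(VL A), (u : ℕ × ℕ) ≠ (v : ℕ × ℕ) → Ancestor A u v → ℓ u < ℓ v)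
    (hp : p ∈ A) (hq : q ∈ A) (hrow : p.2 = q.2) :
    p.1 < q.1 ↔ Fx A ℓ p.1 < Fx A ℓ q.1 := by
  constructor
  · exact Fx_lt hA hℓr hℓm hp hq hrow
  · intro h
    rcases lt_trichotomy p.1 q.1 with h' | h' | h'
    · exact h'
    · rw [h'] at h; omega
    · have := Fx_lt hA hℓr hℓm hq hp hrow.symm h'
      omega

lemma Fy_lt_iff (hA : IsNAT A)
    (hrr : Set.range r = Set.Icc 1 (VR A).ncard)
    (hrm : ∀ u v : ↥(VR A), (u : ℕ × ℕ) ≠ (v : ℕ × ℕ) → Ancestor A u v → r u < r v)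
    (hp : p ∈ A) (hq : q ∈ A) (hcol : p.1 = q.1) :
    p.2 < q.2 ↔ Fy A r p.2 < Fy A r q.2 := by
  constructor
  · exact Fy_lt hA hrr hrm hp hq hcol
  · intro h
    rcases lt_trichotomy p.2 q.2 with h' | h' | h'
    · exact h'
    · rw [h'] at h; omega
    · have := Fy_lt hA hrr hrm hq hp hcol.symm h'
      omega

end Construct
section ConstructMain

variable {A : Finset (ℕ × ℕ)} {ℓ : ↥(VL A) → ℕ} {r : ↥(VR A) → ℕ} {p q u v : ℕ × ℕ}

lemma Fmap_fst (p : ℕ × ℕ) : (Fmap A ℓ r p).1 = Fx A ℓ p.1 := rfl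
lemma Fmap_snd (p : ℕ × ℕ) : (Fmap A ℓ r p).2 = Fy A r p.2 := rfl

variable (hA : IsNAT A)
  (hℓi : Function.Injective ℓ) (hℓr : Set.range ℓ = Set.Icc 1 (VL A).ncard)
  (hℓm : ∀ u v : ↥(VL A), (u : ℕ × ℕ) ≠ (v : ℕ × ℕ) → Ancestor A u v → ℓ u < ℓ v)
  (hri : Function.Injective r) (hrr : Set.range r = Set.Icc 1 (VR A).ncard)
  (hrm : ∀ u v : ↥(VR A), (u : ℕ × ℕ) ≠ (v : ℕ × ℕ) → Ancestor A u v → r u < r v)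

include hA hℓi hℓr hri hrr in
lemma Fmap_injOn : Set.InjOn (Fmap A ℓ r) ↑A := by
  intro p hp q hq h
  exact Prod.ext (Fx_inj hA hℓi hℓr hp hq (congrArg Prod.fst h))
    (Fy_inj hA hri hrr hp hq (congrArg Prod.snd h))

include hA hℓr hℓm hri hrr in
lemma Fmap_leftParent_iff (hp : p ∈ A) (hq : q ∈ A) :
    LeftParent A p q ↔
      LeftParent (A.image (Fmap A ℓ r)) (Fmap A ℓ r p) (Fmap A ℓ r q) := by
  constructor
  · intro h
    refine ⟨Finset.mem_image_of_mem _ hp, Finset.mem_image_of_mem _ hq, ?_, ?_, ?_⟩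
    · simp only [Fmap_snd]
      rw [h.2.2.1]
    · simp only [Fmap_fst]
      exact (Fx_lt_iff hA hℓr hℓm hq hp h.2.2.1).1 h.2.2.2.1
    · intro s' hs' hs2 hs1
      obtain ⟨s, hs, rfl⟩ := Finset.mem_image.1 hs'
      simp only [Fmap_fst, Fmap_snd] at hs2 hs1 ⊢
      have hs2' : s.2 = p.2 := Fy_inj hA hri hrr hs hp hs2
      have hs1' : s.1 < p.1 := (Fx_lt_iff hA hℓr hℓm hs hp hs2').2 hs1
      have hle : s.1 ≤ q.1 := h.2.2.2.2 s hs hs2' hs1'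
      rcases eq_or_lt_of_le hle with heq | hlt
      · rw [heq]
      · exact le_of_lt ((Fx_lt_iff hA hℓr hℓm hs hq (by rw [hs2', ← h.2.2.1])).1 hlt)
  · intro h
    have h21 := h.2.2.1
    have h221 := h.2.2.2.1
    simp only [Fmap_fst, Fmap_snd] at h21 h221
    have hrow : q.2 = p.2 := Fy_inj hA hri hrr hq hp h21
    have hlt : q.1 < p.1 := (Fx_lt_iff hA hℓr hℓm hq hp hrow).2 h221
    refine ⟨hp, hq, hrow, hlt, ?_⟩
    intro s hs hs2 hs1
    have h1 : (Fmap A ℓ r s).2 = (Fmap A ℓ r p).2 := by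
      simp only [Fmap_snd]; rw [hs2]
    have h2 : (Fmap A ℓ r s).1 < (Fmap A ℓ r p).1 :=
      (Fx_lt_iff hA hℓr hℓm hs hp hs2).1 hs1
    have h3 := h.2.2.2.2 (Fmap A ℓ r s) (Finset.mem_image_of_mem _ hs) h1 h2
    by_contra hgt
    push_neg at hgt
    have := (Fx_lt_iff hA hℓr hℓm hq hs (by rw [hrow, hs2])).1 hgt
    simp only [Fmap_fst] at h3
    omega

include hA hℓr hℓm hℓi hrr hrm in
lemma Fmap_rightParent_iff (hp : p ∈ A) (hq : q ∈ A) :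
    RightParent A p q ↔
      RightParent (A.image (Fmap A ℓ r)) (Fmap A ℓ r p) (Fmap A ℓ r q) := by
  constructor
  · intro h
    refine ⟨Finset.mem_image_of_mem _ hp, Finset.mem_image_of_mem _ hq, ?_, ?_, ?_⟩
    · simp only [Fmap_fst]
      rw [h.2.2.1]
    · simp only [Fmap_snd]
      exact (Fy_lt_iff hA hrr hrm hq hp h.2.2.1).1 h.2.2.2.1
    · intro s' hs' hs2 hs1
      obtain ⟨s, hs, rfl⟩ := Finset.mem_image.1 hs'
      simp only [Fmap_fst, Fmap_snd] at hs2 hs1 ⊢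
      have hs2' : s.1 = p.1 := Fx_inj hA hℓi hℓr hs hp hs2
      have hs1' : s.2 < p.2 := (Fy_lt_iff hA hrr hrm hs hp hs2').2 hs1
      have hle : s.2 ≤ q.2 := h.2.2.2.2 s hs hs2' hs1'
      rcases eq_or_lt_of_le hle with heq | hlt
      · rw [heq]
      · exact le_of_lt ((Fy_lt_iff hA hrr hrm hs hq (by rw [hs2', ← h.2.2.1])).1 hlt)
  · intro h
    have h21 := h.2.2.1
    have h221 := h.2.2.2.1
    simp only [Fmap_fst, Fmap_snd] at h21 h221
    have hcol : q.1 = p.1 := Fx_inj hA hℓi hℓr hq hp h21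
    have hlt : q.2 < p.2 := (Fy_lt_iff hA hrr hrm hq hp hcol).2 h221
    refine ⟨hp, hq, hcol, hlt, ?_⟩
    intro s hs hs2 hs1
    have h1 : (Fmap A ℓ r s).1 = (Fmap A ℓ r p).1 := by
      simp only [Fmap_fst]; rw [hs2]
    have h2 : (Fmap A ℓ r s).2 < (Fmap A ℓ r p).2 :=
      (Fy_lt_iff hA hrr hrm hs hp hs2).1 hs1
    have h3 := h.2.2.2.2 (Fmap A ℓ r s) (Finset.mem_image_of_mem _ hs) h1 h2
    by_contra hgt
    push_neg at hgt
    have := (Fy_lt_iff hA hrr hrm hq hs (by rw [hcol, hs2])).1 hgt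
    simp only [Fmap_snd] at h3
    omega

include hA hℓi hℓr hℓm hri hrr hrm in
lemma isNAT_Fmap : IsNAT (A.image (Fmap A ℓ r)) := by
  refine ⟨Finset.mem_image.2 ⟨(0, 0), hA.1, Fmap_root⟩, ?_, ?_⟩
  · intro p' hp' hne
    obtain ⟨p, hp, rfl⟩ := Finset.mem_image.1 hp'
    have hpne : p ≠ (0, 0) := by rintro rfl; exact hne Fmap_root
    have hiffR : (∃ q' ∈ A.image (Fmap A ℓ r), q'.1 = (Fmap A ℓ r p).1 ∧
        q'.2 < (Fmap A ℓ r p).2) ↔ (∃ q ∈ A, q.1 = p.1 ∧ q.2 < p.2) := by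
      constructor
      · rintro ⟨q', hq', hq1, hq2⟩
        obtain ⟨q, hq, rfl⟩ := Finset.mem_image.1 hq'
        simp only [Fmap_fst, Fmap_snd] at hq1 hq2
        have hcol : q.1 = p.1 := Fx_inj hA hℓi hℓr hq hp hq1
        exact ⟨q, hq, hcol, (Fy_lt_iff hA hrr hrm hq hp hcol).2 hq2⟩
      · rintro ⟨q, hq, hq1, hq2⟩
        refine ⟨Fmap A ℓ r q, Finset.mem_image_of_mem _ hq, ?_, ?_⟩
        · simp only [Fmap_fst]; rw [hq1]
        · exact (Fy_lt_iff hA hrr hrm hq hp hq1).1 hq2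
    have hiffL : (∃ q' ∈ A.image (Fmap A ℓ r), q'.2 = (Fmap A ℓ r p).2 ∧
        q'.1 < (Fmap A ℓ r p).1) ↔ (∃ q ∈ A, q.2 = p.2 ∧ q.1 < p.1) := by
      constructor
      · rintro ⟨q', hq', hq1, hq2⟩
        obtain ⟨q, hq, rfl⟩ := Finset.mem_image.1 hq'
        simp only [Fmap_fst, Fmap_snd] at hq1 hq2
        have hrow : q.2 = p.2 := Fy_inj hA hri hrr hq hp hq1
        exact ⟨q, hq, hrow, (Fx_lt_iff hA hℓr hℓm hq hp hrow).2 hq2⟩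
      · rintro ⟨q, hq, hq1, hq2⟩
        refine ⟨Fmap A ℓ r q, Finset.mem_image_of_mem _ hq, ?_, ?_⟩
        · simp only [Fmap_snd]; rw [hq1]
        · exact (Fx_lt_iff hA hℓr hℓm hq hp hq1).1 hq2
    rcases hA.2.1 p hp hpne with ⟨h1, h2⟩ | ⟨h1, h2⟩
    · exact Or.inl ⟨hiffR.2 h1, fun hh => h2 (hiffL.1 hh)⟩
    · exact Or.inr ⟨hiffL.2 h1, fun hh => h2 (hiffR.1 hh)⟩
  · intro p' hp'
    obtain ⟨p, hp, rfl⟩ := Finset.mem_image.1 hp'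
    constructor
    · intro x' hx'
      simp only [Fmap_fst] at hx'
      by_cases h0 : x' = 0
      · exact ⟨(0, 0), Finset.mem_image.2 ⟨(0, 0), hA.1, Fmap_root⟩, h0.symm⟩
      · have hple : Fx A ℓ p.1 ≤ (VL A).ncard := by
          by_cases hp0 : p.1 = 0
          · rw [hp0, Fx_zero]; omega
          · exact (Fx_pos hA hℓr hp (by omega)).2
        have : x' ∈ Set.range ℓ := by
          rw [hℓr]; exact ⟨by omega, by omega⟩
        obtain ⟨w, hw⟩ := this
        refine ⟨Fmap A ℓ r ↑w, Finset.mem_image_of_mem _ w.property.1, ?_⟩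
        show Fx A ℓ (w : ℕ × ℕ).1 = x'
        rw [Fx_eq hA w.property, Subtype.coe_eta, hw]
    · intro y' hy'
      simp only [Fmap_snd] at hy'
      by_cases h0 : y' = 0
      · exact ⟨(0, 0), Finset.mem_image.2 ⟨(0, 0), hA.1, Fmap_root⟩, h0.symm⟩
      · have hple : Fy A r p.2 ≤ (VR A).ncard := by
          by_cases hp0 : p.2 = 0
          · rw [hp0, Fy_zero]; omega
          · exact (Fy_pos hA hrr hp (by omega)).2
        have : y' ∈ Set.range r := by
          rw [hrr]; exact ⟨by omega, by omega⟩
        obtain ⟨w, hw⟩ := this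
        refine ⟨Fmap A ℓ r ↑w, Finset.mem_image_of_mem _ w.property.1, ?_⟩
        show Fy A r (w : ℕ × ℕ).2 = y'
        rw [Fy_eq hA w.property, Subtype.coe_eta, hw]

include hA hℓi hℓr hℓm hri hrr hrm in
lemma natIso_Fmap : NATIso A (A.image (Fmap A ℓ r)) := by
  refine ⟨Fmap A ℓ r, ?_, Fmap_root, fun p hp q hq =>
    ⟨Fmap_leftParent_iff hA hℓr hℓm hri hrr hp hq,
     Fmap_rightParent_iff hA hℓi hℓr hℓm hrr hrm hp hq⟩⟩
  rw [Finset.coe_image]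
  exact (Fmap_injOn hA hℓi hℓr hri hrr).bijOn_image

lemma Fmap_label_left (hA : IsNAT A) (w : ↥(VL A)) : (Fmap A ℓ r ↑w).1 = ℓ w := by
  show Fx A ℓ (w : ℕ × ℕ).1 = ℓ w
  rw [Fx_eq hA w.property, Subtype.coe_eta]

lemma Fmap_label_right (hA : IsNAT A) (w : ↥(VR A)) : (Fmap A ℓ r ↑w).2 = r w := by
  show Fy A r (w : ℕ × ℕ).2 = r w
  rw [Fy_eq hA w.property, Subtype.coe_eta]

end ConstructMain
open Classical in
/-- the label-extraction map -/
noncomputable def Phi (A : Finset (ℕ × ℕ)) (A' : Finset (ℕ × ℕ)) :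
    (↥(VL A) → ℕ) × (↥(VR A) → ℕ) :=
  if h : NATIso A A' then
    ((fun u : ↥(VL A) => (h.choose (u : ℕ × ℕ)).1),
     (fun v : ↥(VR A) => (h.choose (v : ℕ × ℕ)).2))
  else (fun _ => 0, fun _ => 0)

theorem natCount_eq_linear_extensions' (A : Finset (ℕ × ℕ)) (hA : IsNAT A) :
    NATcount A = eL A * eR A := by
  classical
  set SL : Set (↥(VL A) → ℕ) := {f : ↥(VL A) → ℕ | Function.Injective f ∧
    Set.range f = Set.Icc 1 (VL A).ncard ∧
    ∀ u v : ↥(VL A), (u : ℕ × ℕ) ≠ (v : ℕ × ℕ) → Ancestor A u v → f u < f v} with hSL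
  set SR : Set (↥(VR A) → ℕ) := {f : ↥(VR A) → ℕ | Function.Injective f ∧
    Set.range f = Set.Icc 1 (VR A).ncard ∧
    ∀ u v : ↥(VR A), (u : ℕ × ℕ) ≠ (v : ℕ × ℕ) → Ancestor A u v → f u < f v} with hSR
  set S : Set (Finset (ℕ × ℕ)) := {A' | IsNAT A' ∧ NATIso A A'} with hS
  have hbij : Set.BijOn (Phi A) S (SL ×ˢ SR) := by
    refine ⟨?_, ?_, ?_⟩
    -- MapsTo
    · rintro A' ⟨hA', hiso⟩
      rw [Phi, dif_pos hiso]
      obtain ⟨hbijf, hrootf, hparf⟩ := hiso.choose_spec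
      set f := hiso.choose with hf
      have hVLb : Set.BijOn f (VL A) (VL A') := iso_VL_bijOn hbijf hparf
      have hVRb : Set.BijOn f (VR A) (VR A') := iso_VR_bijOn hbijf hparf
      have hcardL : (VL A').ncard = (VL A).ncard := by
        rw [← hVLb.image_eq, Set.ncard_image_of_injOn hVLb.injOn]
      have hcardR : (VR A').ncard = (VR A).ncard := by
        rw [← hVRb.image_eq, Set.ncard_image_of_injOn hVRb.injOn]
      constructor
      · refine ⟨?_, ?_, ?_⟩
        · intro u w h
          have h2 : f ↑u = f ↑w :=
            VL_fst_injOn hA' (hVLb.mapsTo u.property) (hVLb.mapsTo w.property) h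
          exact Subtype.ext (hbijf.injOn u.property.1 w.property.1 h2)
        · have : Set.range (fun u : ↥(VL A) => (f ↑u).1) =
              Prod.fst '' (f '' (VL A)) := by
            rw [← Set.image_comp, Set.image_eq_range]
            rfl
          rw [this, hVLb.image_eq, VL_fst_image hA', hcardL]
        · intro u w hne hanc
          have h1 : f ↑u ∈ VL A' := hVLb.mapsTo u.property
          have h2 : f ↑w ∈ VL A' := hVLb.mapsTo w.property
          have hne' : f ↑u ≠ f ↑w := fun h =>
            hne (hbijf.injOn u.property.1 w.property.1 h)
          exact VL_ancestor_fst_lt hA' h1 h2 hne' (iso_ancestor hparf hanc)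
      · refine ⟨?_, ?_, ?_⟩
        · intro u w h
          have h2 : f ↑u = f ↑w :=
            VR_snd_injOn hA' (hVRb.mapsTo u.property) (hVRb.mapsTo w.property) h
          exact Subtype.ext (hbijf.injOn u.property.1 w.property.1 h2)
        · have : Set.range (fun u : ↥(VR A) => (f ↑u).2) =
              Prod.snd '' (f '' (VR A)) := by
            rw [← Set.image_comp, Set.image_eq_range]
            rfl
          rw [this, hVRb.image_eq, VR_snd_image hA', hcardR]
        · intro u w hne hanc
          have h1 : f ↑u ∈ VR A' := hVRb.mapsTo u.property
          have h2 : f ↑w ∈ VR A' := hVRb.mapsTo w.property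
          have hne' : f ↑u ≠ f ↑w := fun h =>
            hne (hbijf.injOn u.property.1 w.property.1 h)
          exact VR_ancestor_snd_lt hA' h1 h2 hne' (iso_ancestor hparf hanc)
    -- InjOn
    · rintro A' ⟨hA', hiso'⟩ A'' ⟨hA'', hiso''⟩ heq
      rw [Phi, dif_pos hiso', Phi, dif_pos hiso''] at heq
      obtain ⟨hbij', hroot', hpar'⟩ := hiso'.choose_spec
      obtain ⟨hbij'', hroot'', hpar''⟩ := hiso''.choose_spec
      set f' := hiso'.choose with hf'
      set f'' := hiso''.choose with hf''
      have heq1 := congrArg Prod.fst heq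
      have heq2 := congrArg Prod.snd heq
      simp only at heq1 heq2
      have hEq : ∀ p ∈ A, f' p = f'' p := by
        intro p hp
        apply Prod.ext
        · obtain ⟨u, huA, hu1, humin, hval⟩ := iso_fst_colMin hA hpar' hp
          obtain ⟨w, hwA, hw1, hwmin, hval'⟩ := iso_fst_colMin hA hpar'' hp
          have huw : u = w := by
            refine Prod.ext (by omega) ?_
            have h1 := humin w hwA (by omega)
            have h2 := hwmin u huA (by omega)
            omega
          subst huw
          rw [← hval, ← hval']
          by_cases hp0 : p.1 = 0
          · have hur : u = (0, 0) :=
              colMin_eq_root hA huA (by omega) (fun s hs hs1 => humin s hs (by omega))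
            rw [hur, hroot', hroot'']
          · have huVL : u ∈ VL A :=
              colMin_mem_VL hA huA (by omega) (fun s hs hs1 => humin s hs (by omega))
            exact congrFun heq1 ⟨u, huVL⟩
        · obtain ⟨u, huA, hu1, humin, hval⟩ := iso_snd_rowMin hA hpar' hp
          obtain ⟨w, hwA, hw1, hwmin, hval'⟩ := iso_snd_rowMin hA hpar'' hp
          have huw : u = w := by
            refine Prod.ext ?_ (by omega)
            have h1 := humin w hwA (by omega)
            have h2 := hwmin u huA (by omega)
            omega
          subst huw
          rw [← hval, ← hval']
          by_cases hp0 : p.2 = 0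
          · have hur : u = (0, 0) :=
              rowMin_eq_root hA huA (by omega) (fun s hs hs1 => humin s hs (by omega))
            rw [hur, hroot', hroot'']
          · have huVR : u ∈ VR A :=
              rowMin_mem_VR hA huA (by omega) (fun s hs hs1 => humin s hs (by omega))
            exact congrFun heq2 ⟨u, huVR⟩
      have : (A' : Set (ℕ × ℕ)) = (A'' : Set (ℕ × ℕ)) := by
        rw [← hbij'.image_eq, ← hbij''.image_eq]
        exact Set.image_congr hEq
      exact Finset.coe_injective this
    -- SurjOn
    · rintro ⟨ℓ, r⟩ ⟨hℓ, hr⟩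
      obtain ⟨hℓi, hℓr, hℓm⟩ := hℓ
      obtain ⟨hri, hrr, hrm⟩ := hr
      set B := A.image (Fmap A ℓ r) with hB
      have hBnat : IsNAT B := isNAT_Fmap hA hℓi hℓr hℓm hri hrr hrm
      have hBiso : NATIso A B := natIso_Fmap hA hℓi hℓr hℓm hri hrr hrm
      refine ⟨B, ⟨hBnat, hBiso⟩, ?_⟩
      rw [Phi, dif_pos hBiso]
      obtain ⟨hbijg, hrootg, hparg⟩ := hBiso.choose_spec
      set g := hBiso.choose with hg
      have hEq : ∀ p ∈ A, g p = Fmap A ℓ r p := by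
        intro p hp
        exact iso_eqOn hA hrootg hparg Fmap_root
          (fun p hp q hq => ⟨Fmap_leftParent_iff hA hℓr hℓm hri hrr hp hq,
            Fmap_rightParent_iff hA hℓi hℓr hℓm hrr hrm hp hq⟩) hp
      refine Prod.ext (funext fun u => ?_) (funext fun w => ?_)
      · show (g ↑u).1 = ℓ u
        rw [hEq ↑u u.property.1]
        exact Fmap_label_left hA u
      · show (g ↑w).2 = r w
        rw [hEq ↑w w.property.1]
        exact Fmap_label_right hA w
  have hcount : S.ncard = (SL ×ˢ SR).ncard := by
    rw [← hbij.image_eq, Set.ncard_image_of_injOn hbij.injOn]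
  have hprod : (SL ×ˢ SR).ncard = SL.ncard * SR.ncard := by
    have h1 := Nat.card_congr (Equiv.Set.prod SL SR)
    rw [Nat.card_prod] at h1
    simpa [Nat.card_coe_set_eq] using h1
  rw [NATcount, eL, eR]
  rw [← hS, ← hSL, ← hSR, hcount, hprod]

theorem natCount_eq_linear_extensions (A : Finset (ℕ × ℕ)) (hA : IsNAT A) :
    NATcount A = eL A * eR A := by
  exact natCount_eq_linear_extensions' A hA
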